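/- For any nonzero matrix M ∈ M_{n×m}(ℂ), the set of all fluctuations {Σ_j r_j u_j M v_j : r_j ∈ ℝ, u_j ∈ U(n), v_j ∈ U(m), finite sums} equals all of M_{n×m}(ℂ). -/

import Mathlib

open Matrix

private lemma diag_unit_mem_unitary {n : ℕ} (f : Fin n → ℂ) (hf : ∀ k, ‖f k‖ = 1) :
    Matrix.diagonal f ∈ Matrix.unitaryGroup (Fin n) ℂ := by
  rw [Matrix.mem_unitaryGroup_iff, Matrix.star_eq_conjTranspose, Matrix.diagonal_conjTranspose,
    Matrix.diagonal_mul_diagonal]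
  ext a b
  rcases eq_or_ne a b with rfl | h
  · simp only [Matrix.diagonal_apply_eq, Matrix.one_apply_eq, Pi.mul_apply, Pi.star_apply]
    rw [Complex.star_def, Complex.mul_conj']
    norm_cast
    rw [hf a]; norm_num
  · simp [Matrix.diagonal_apply_ne _ h, Matrix.one_apply_ne h]

private lemma perm_mem_unitary {n : ℕ} (σ : Equiv.Perm (Fin n)) :
    σ.permMatrix ℂ ∈ Matrix.unitaryGroup (Fin n) ℂ := by
  rw [Matrix.mem_unitaryGroup_iff, Matrix.star_eq_conjTranspose]
  have h1 : (σ.permMatrix ℂ)ᴴ = (σ.permMatrix ℂ)ᵀ := by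
    ext a b
    simp [Matrix.conjTranspose_apply, PEquiv.toMatrix_apply, Equiv.toPEquiv_apply, apply_ite]
  rw [h1, ← PEquiv.toMatrix_symm, ← Equiv.toPEquiv_symm, ← PEquiv.toMatrix_trans,
    ← Equiv.toPEquiv_trans]
  simp

private lemma sbm_mul_mul_sbm {n m : ℕ} (M : Matrix (Fin n) (Fin m) ℂ) (i p : Fin n)
    (q j : Fin m) (c d : ℂ) :
    Matrix.single i p c * M * Matrix.single q j d = Matrix.single i j (c * M p q * d) := by
  ext a b
  simp only [Matrix.mul_apply, Matrix.single, Matrix.of_apply, ite_and,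
    Finset.sum_ite_eq, Finset.mem_univ, if_true, boole_mul, mul_boole, ite_mul, zero_mul,
    mul_zero, mul_ite, Finset.sum_ite_irrel, Finset.sum_const_zero]
  by_cases h1 : i = a <;> by_cases h2 : j = b <;> simp [h1, h2]

private lemma diag_sub_diag {n : ℕ} (p : Fin n) (z : ℂ) :
    Matrix.diagonal (fun k => if k = p then z else 1) -
      Matrix.diagonal (fun k => if k = p then -z else 1) = Matrix.single p p (2*z) := by
  ext a b
  rcases eq_or_ne a b with rfl | h
  · by_cases h : a = p
    · subst h; simp [Matrix.single]; ring
    · simp only [Matrix.sub_apply, Matrix.diagonal_apply_eq, if_neg h, Matrix.single,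
        Matrix.of_apply, sub_self]
      rw [if_neg]; rintro ⟨rfl, -⟩; exact h rfl
  · simp only [Matrix.sub_apply, Matrix.diagonal_apply_ne _ h, Matrix.single,
      Matrix.of_apply, sub_zero]
    rw [if_neg]
    rintro ⟨rfl, rfl⟩; exact h rfl

private lemma perm_mul_sbm {n : ℕ} (i p : Fin n) (c : ℂ) :
    (Equiv.swap i p).permMatrix ℂ * Matrix.single p p c = Matrix.single i p c := by
  rw [PEquiv.toMatrix_toPEquiv_mul]
  ext a b
  simp only [Matrix.submatrix_apply, id_eq, Matrix.single, Matrix.of_apply]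
  congr 1
  rw [eq_iff_iff]
  constructor
  · rintro ⟨h1, rfl⟩
    refine ⟨?_, rfl⟩
    have := congrArg (Equiv.swap i p) h1
    rw [Equiv.swap_apply_right, Equiv.swap_apply_self] at this
    exact this
  · rintro ⟨rfl, rfl⟩
    simp [Equiv.swap_apply_left]

private lemma sbm_mul_perm {n : ℕ} (q j : Fin n) (c : ℂ) :
    Matrix.single q q c * (Equiv.swap q j).permMatrix ℂ = Matrix.single q j c := by
  rw [PEquiv.mul_toMatrix_toPEquiv]
  ext a b
  simp only [Matrix.submatrix_apply, id_eq, Matrix.single, Matrix.of_apply]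
  congr 1
  rw [eq_iff_iff]
  constructor
  · rintro ⟨rfl, h2⟩
    refine ⟨rfl, ?_⟩
    rw [Equiv.symm_swap] at h2
    have := congrArg (Equiv.swap q j) h2
    rw [Equiv.swap_apply_left, Equiv.swap_apply_self] at this
    exact this
  · rintro ⟨rfl, rfl⟩
    simp [Equiv.swap_apply_right]

/-- For a nonzero `M ∈ M_{n×m}(ℂ)`, the set of fluctuations (finite real linear
combinations of `u * M * v` with unitaries `u, v`) is all of `M_{n×m}(ℂ)`. -/
theorem span_fluctuations_eq_top (n m : ℕ) (M : Matrix (Fin n) (Fin m) ℂ) (hM : M ≠ 0) :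
    Submodule.span ℝ
      {X : Matrix (Fin n) (Fin m) ℂ |
        ∃ u ∈ Matrix.unitaryGroup (Fin n) ℂ, ∃ v ∈ Matrix.unitaryGroup (Fin m) ℂ,
          X = u * M * v} = ⊤ := by
  set S := Submodule.span ℝ
      {X : Matrix (Fin n) (Fin m) ℂ |
        ∃ u ∈ Matrix.unitaryGroup (Fin n) ℂ, ∃ v ∈ Matrix.unitaryGroup (Fin m) ℂ,
          X = u * M * v} with hS
  obtain ⟨p, q, hpq⟩ : ∃ p q, M p q ≠ 0 := by
    by_contra h
    push_neg at h
    exact hM (by ext a b; simpa using h a b)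
  -- step 1: for unit z, the matrix `Matrix.single i j (z * M p q)` is in S
  have key : ∀ (i : Fin n) (j : Fin m) (z : ℂ), ‖z‖ = 1 →
      Matrix.single i j (z * M p q) ∈ S := by
    intro i j z hz
    set P := (Equiv.swap i p).permMatrix ℂ with hP
    set Q := (Equiv.swap q j).permMatrix ℂ with hQ
    set D1 := Matrix.diagonal (fun k : Fin n => if k = p then z else 1) with hD1
    set D2 := Matrix.diagonal (fun k : Fin n => if k = p then -z else 1) with hD2
    set F2 := Matrix.diagonal (fun k : Fin m => if k = q then (-1 : ℂ) else 1) with hF2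
    have hu1 : P * D1 ∈ Matrix.unitaryGroup (Fin n) ℂ := by
      refine mul_mem (perm_mem_unitary _) (diag_unit_mem_unitary _ fun k => ?_)
      by_cases hk : k = p <;> simp [hk, hz]
    have hu2 : P * D2 ∈ Matrix.unitaryGroup (Fin n) ℂ := by
      refine mul_mem (perm_mem_unitary _) (diag_unit_mem_unitary _ fun k => ?_)
      by_cases hk : k = p <;> simp [hk, hz]
    have hv1 : Q ∈ Matrix.unitaryGroup (Fin m) ℂ := perm_mem_unitary _
    have hv2 : F2 * Q ∈ Matrix.unitaryGroup (Fin m) ℂ := by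
      refine mul_mem (diag_unit_mem_unitary _ fun k => ?_) hv1
      by_cases hk : k = q <;> simp [hk]
    -- the 4-term identity
    have hL : P * D1 - P * D2 = Matrix.single i p (2 * z) := by
      rw [← mul_sub, hD1, hD2, diag_sub_diag, perm_mul_sbm]
    have hE : (1 : Matrix (Fin m) (Fin m) ℂ) - F2 = Matrix.single q q 2 := by
      have h := diag_sub_diag q (1 : ℂ)
      rw [show (2:ℂ) * 1 = 2 by ring] at h
      rw [← h, hF2]
      congr 1
      ext k l
      rcases eq_or_ne k l with rfl | hkl
      · by_cases hk : k = q <;> simp [hk]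
      · simp [Matrix.one_apply_ne hkl, Matrix.diagonal_apply_ne _ hkl]
    have hR : Q - F2 * Q = Matrix.single q j 2 := by
      rw [show Q - F2 * Q = (1 - F2) * Q by rw [Matrix.sub_mul, Matrix.one_mul], hE,
        sbm_mul_perm]
    have hid : (P * D1) * M * Q - (P * D1) * M * (F2 * Q) - (P * D2) * M * Q
        + (P * D2) * M * (F2 * Q) = (4:ℝ) • Matrix.single i j (z * M p q) := by
      have : (P * D1) * M * Q - (P * D1) * M * (F2 * Q) - (P * D2) * M * Q
          + (P * D2) * M * (F2 * Q) = (P * D1 - P * D2) * M * (Q - F2 * Q) := by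
        rw [Matrix.sub_mul, Matrix.sub_mul, Matrix.mul_sub, Matrix.mul_sub]
        abel
      rw [this, hL, hR, sbm_mul_mul_sbm, smul_single]
      congr 1
      rw [Complex.real_smul]
      push_cast
      ring
    have hmem : (P * D1) * M * Q - (P * D1) * M * (F2 * Q) - (P * D2) * M * Q
        + (P * D2) * M * (F2 * Q) ∈ S := by
      refine add_mem (sub_mem (sub_mem ?_ ?_) ?_) ?_ <;>
        exact Submodule.subset_span ⟨_, by assumption, _, by assumption, rfl⟩
    rw [hid] at hmem
    have := Submodule.smul_mem S (4⁻¹ : ℝ) hmem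
    rwa [smul_smul, show (4⁻¹ : ℝ) * 4 = 1 by norm_num, one_smul] at this
  -- step 2: every std basis matrix is in S
  have key2 : ∀ (i : Fin n) (j : Fin m) (c : ℂ), Matrix.single i j c ∈ S := by
    intro i j c
    rcases eq_or_ne c 0 with rfl | hc
    · rw [Matrix.single_zero]
      exact zero_mem S
    · set d : ℂ := c / M p q with hd
      have hd0 : d ≠ 0 := div_ne_zero hc hpq
      have hnd : (‖d‖ : ℂ) ≠ 0 := by
        simpa using norm_ne_zero_iff.mpr hd0
      set z : ℂ := d / ‖d‖ with hzdef
      have hz : ‖z‖ = 1 := by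
        rw [hzdef, norm_div, Complex.norm_real, norm_norm,
          div_self (norm_ne_zero_iff.mpr hd0)]
      have h1 : Matrix.single i j c = ‖d‖ • Matrix.single i j (z * M p q) := by
        rw [smul_single]
        congr 1
        rw [hzdef, Complex.real_smul, div_mul_eq_mul_div, mul_comm, div_mul_eq_mul_div,
          mul_div_assoc, div_self hnd, mul_one, hd, div_mul_cancel₀ _ hpq]
      rw [h1]
      exact Submodule.smul_mem S _ (key i j z hz)
  -- step 3: conclude
  rw [eq_top_iff]
  intro X _
  rw [matrix_eq_sum_single X]
  exact Submodule.sum_mem _ fun i _ => Submodule.sum_mem _ fun j _ => key2 i j _
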